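/- For every positive integer N, the polynomial p_N has exactly one zero y* in the open interval (0,1), and this zero satisfies y* < (N+1)/(N+2). Consequently, y* is the unique critical point of F̃_N in (0,1) (the unique y ∈ (0,1) with F̃_N′(y) = 0). -/

import Mathlib

/-- The polynomial `p_N(y) = 1 - (N+1)² y^N + N(2N+3) y^{N+1} - N(N+1) y^{N+2}`. -/
noncomputable def pN (N : ℕ) (y : ℝ) : ℝ :=
  1 - ((N : ℝ) + 1) ^ 2 * y ^ N + (N : ℝ) * (2 * (N : ℝ) + 3) * y ^ (N + 1)
    - (N : ℝ) * ((N : ℝ) + 1) * y ^ (N + 2)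

/-- The bifurcation function `F̃_N(y) = (y/(1-y)) (1 - (N+1) y^N + N y^{N+1})`. -/
noncomputable def Ftilde (N : ℕ) (y : ℝ) : ℝ :=
  (y / (1 - y)) * (1 - ((N : ℝ) + 1) * y ^ N + (N : ℝ) * y ^ (N + 1))

/-- Auxiliary function: `pN (m+1) y = 1 - hFun m y`. -/
noncomputable def hFun (m : ℕ) (y : ℝ) : ℝ :=
  y ^ (m + 1) * (((m : ℝ) + 2) ^ 2 - ((m : ℝ) + 1) * (2 * (m : ℝ) + 5) * y
    + ((m : ℝ) + 1) * ((m : ℝ) + 2) * y ^ 2)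

lemma pN_eq (m : ℕ) (y : ℝ) : pN (m + 1) y = 1 - hFun m y := by
  simp only [pN, hFun]
  push_cast
  ring

lemma hFun_hasDerivAt (m : ℕ) (y : ℝ) :
    HasDerivAt (hFun m)
      (((m : ℝ) + 1) * ((m : ℝ) + 2) * y ^ m *
        ((1 - y) * (((m : ℝ) + 2) - ((m : ℝ) + 3) * y))) y := by
  have hA : HasDerivAt (fun y : ℝ => ((m : ℝ) + 2) ^ 2 - ((m : ℝ) + 1) * (2 * (m : ℝ) + 5) * y
      + ((m : ℝ) + 1) * ((m : ℝ) + 2) * y ^ 2)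
      (-(((m : ℝ) + 1) * (2 * (m : ℝ) + 5)) + ((m : ℝ) + 1) * ((m : ℝ) + 2) * (2 * y)) y := by
    have := ((hasDerivAt_const y (((m : ℝ) + 2) ^ 2)).sub
      ((hasDerivAt_id y).const_mul (((m : ℝ) + 1) * (2 * (m : ℝ) + 5)))).add
      ((hasDerivAt_pow 2 y).const_mul (((m : ℝ) + 1) * ((m : ℝ) + 2)))
    refine this.congr_deriv ?_
    push_cast
    ring
  have := (hasDerivAt_pow (m + 1) y).mul hA
  refine this.congr_deriv ?_
  simp only [Nat.add_sub_cancel]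
  push_cast
  ring

lemma hFun_cont (m : ℕ) : Continuous (hFun m) := by
  unfold hFun; fun_prop

lemma hFun_mono (m : ℕ) :
    StrictMonoOn (hFun m) (Set.Icc 0 (((m : ℝ) + 2) / ((m : ℝ) + 3))) := by
  apply strictMonoOn_of_deriv_pos (convex_Icc _ _) (hFun_cont m).continuousOn
  intro y hy
  rw [interior_Icc, Set.mem_Ioo] at hy
  rw [(hFun_hasDerivAt m y).deriv]
  have h3 : (0:ℝ) < (m : ℝ) + 3 := by positivity
  have hy2 : ((m : ℝ) + 3) * y < (m : ℝ) + 2 := by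
    rw [mul_comm]
    exact (lt_div_iff₀ h3).mp hy.2
  have hy1 : y < 1 := lt_of_lt_of_le hy.2 (by
    rw [div_le_one h3]; linarith)
  have : (0:ℝ) < ((m : ℝ) + 2) - ((m : ℝ) + 3) * y := by linarith
  have hyp : (0:ℝ) < y ^ m := pow_pos hy.1 m
  have h1y : (0:ℝ) < 1 - y := by linarith
  positivity

lemma hFun_anti (m : ℕ) :
    StrictAntiOn (hFun m) (Set.Icc (((m : ℝ) + 2) / ((m : ℝ) + 3)) 1) := by
  apply strictAntiOn_of_deriv_neg (convex_Icc _ _) (hFun_cont m).continuousOn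
  intro y hy
  rw [interior_Icc, Set.mem_Ioo] at hy
  rw [(hFun_hasDerivAt m y).deriv]
  have h3 : (0:ℝ) < (m : ℝ) + 3 := by positivity
  have hy0 : 0 < y := lt_of_lt_of_le (by positivity) hy.1.le
  have hy2 : (m : ℝ) + 2 < ((m : ℝ) + 3) * y := by
    rw [mul_comm]
    exact (div_lt_iff₀ h3).mp hy.1
  have hneg : ((m : ℝ) + 2) - ((m : ℝ) + 3) * y < 0 := by linarith
  have hyp : (0:ℝ) < y ^ m := pow_pos hy0 m
  have h1y : (0:ℝ) < 1 - y := by linarith [hy.2]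
  nlinarith [mul_pos (mul_pos
    (by positivity : (0:ℝ) < ((m : ℝ) + 1) * ((m : ℝ) + 2) * y ^ m) h1y)
    (neg_pos.mpr hneg)]

lemma Ftilde_hasDerivAt (m : ℕ) (y : ℝ) (hy : y ≠ 1) :
    HasDerivAt (Ftilde (m + 1)) (pN (m + 1) y / (1 - y) ^ 2) y := by
  have h1y : (1 : ℝ) - y ≠ 0 := sub_ne_zero.mpr (Ne.symm hy)
  have hd1 : HasDerivAt (fun y : ℝ => y / (1 - y))
      ((1 * (1 - y) - y * (0 - 1)) / (1 - y) ^ 2) y :=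
    (hasDerivAt_id y).div ((hasDerivAt_const y 1).sub (hasDerivAt_id y)) h1y
  have hd2 : HasDerivAt (fun y : ℝ => 1 - ((m : ℝ) + 2) * y ^ (m + 1) + ((m : ℝ) + 1) * y ^ (m + 2))
      (0 - ((m : ℝ) + 2) * ((↑(m + 1) : ℝ) * y ^ m)
        + ((m : ℝ) + 1) * ((↑(m + 2) : ℝ) * y ^ (m + 1))) y := by
    have := ((hasDerivAt_const y (1:ℝ)).sub
      ((hasDerivAt_pow (m + 1) y).const_mul ((m : ℝ) + 2))).add
      ((hasDerivAt_pow (m + 2) y).const_mul ((m : ℝ) + 1))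
    refine this.congr_deriv ?_
    simp
  have hd := hd1.mul hd2
  have hfun : Ftilde (m + 1) = fun y : ℝ =>
      (y / (1 - y)) * (1 - ((m : ℝ) + 2) * y ^ (m + 1) + ((m : ℝ) + 1) * y ^ (m + 2)) := by
    funext z
    simp only [Ftilde]
    push_cast
    ring_nf
  rw [hfun]
  refine hd.congr_deriv ?_
  simp only [pN]
  push_cast
  field_simp
  ring

/-- `p_N` has exactly one zero `y*` in `(0,1)`, it satisfies `y* < (N+1)/(N+2)`, and
`y*` is the unique critical point of `F̃_N` in `(0,1)`. -/
theorem stmt6 (N : ℕ) (hN : 1 ≤ N) :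
    ∃ ystar : ℝ, ystar ∈ Set.Ioo (0 : ℝ) 1 ∧ pN N ystar = 0 ∧
      ystar < ((N : ℝ) + 1) / ((N : ℝ) + 2) ∧
      (∀ y ∈ Set.Ioo (0 : ℝ) 1, pN N y = 0 → y = ystar) ∧
      (∀ y ∈ Set.Ioo (0 : ℝ) 1, deriv (Ftilde N) y = 0 ↔ y = ystar) := by
  obtain ⟨m, rfl⟩ : ∃ m, N = m + 1 := ⟨N - 1, (Nat.succ_pred_eq_of_pos hN).symm⟩
  set c : ℝ := ((m : ℝ) + 2) / ((m : ℝ) + 3) with hc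
  have h3 : (0:ℝ) < (m : ℝ) + 3 := by positivity
  have hc0 : (0:ℝ) < c := by positivity
  have hc1 : c < 1 := by rw [hc, div_lt_one h3]; linarith
  have hcast : ((↑(m + 1) : ℝ) + 1) / ((↑(m + 1) : ℝ) + 2) = c := by
    rw [hc]; push_cast; ring_nf
  have h0 : hFun m 0 = 0 := by simp [hFun]
  have h1 : hFun m 1 = 1 := by simp [hFun]; ring
  -- hFun m c > 1
  have hcmem : c ∈ Set.Icc c 1 := ⟨le_refl c, hc1.le⟩
  have h1mem : (1:ℝ) ∈ Set.Icc c 1 := ⟨hc1.le, le_refl 1⟩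
  have hcgt : 1 < hFun m c := by
    have := hFun_anti m hcmem h1mem hc1
    rwa [h1] at this
  -- IVT for pN on [0, c]
  have hpc : pN (m + 1) c < 0 := by rw [pN_eq]; linarith
  have hp0 : (0:ℝ) < pN (m + 1) 0 := by rw [pN_eq, h0]; norm_num
  have hcont : ContinuousOn (pN (m + 1)) (Set.Icc 0 c) := by
    have : Continuous (pN (m + 1)) := by
      have : pN (m + 1) = fun y => 1 - hFun m y := by funext z; exact pN_eq m z
      rw [this]; exact continuous_const.sub (hFun_cont m)
    exact this.continuousOn
  have hIVT := intermediate_value_Ioo' hc0.le hcont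
  have h0mem : (0:ℝ) ∈ Set.Ioo (pN (m + 1) c) (pN (m + 1) 0) := ⟨hpc, hp0⟩
  obtain ⟨ystar, hymem, hpy⟩ := hIVT h0mem
  have hy1 : ystar < 1 := lt_trans hymem.2 hc1
  have hystar1 : hFun m ystar = 1 := by
    have := pN_eq m ystar
    rw [hpy] at this
    linarith
  -- uniqueness of the zero
  have huniq : ∀ y ∈ Set.Ioo (0:ℝ) 1, pN (m + 1) y = 0 → y = ystar := by
    intro y hy hpy'
    have hfy : hFun m y = 1 := by
      have := pN_eq m y
      rw [hpy'] at this
      linarith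
    rcases lt_or_ge y c with hlt | hge
    · exact (hFun_mono m).injOn ⟨hy.1.le, hlt.le⟩ ⟨hymem.1.le, hymem.2.le⟩
        (by rw [hfy, hystar1])
    · exact absurd hfy (by
        have := hFun_anti m ⟨hge, hy.2.le⟩ h1mem hy.2
        rw [h1] at this
        linarith)
  refine ⟨ystar, ⟨hymem.1, hy1⟩, hpy, by rw [hcast]; exact hymem.2, huniq, ?_⟩
  intro y hy
  have hder := (Ftilde_hasDerivAt m y hy.2.ne).deriv
  rw [hder]
  have h1y : ((1:ℝ) - y) ^ 2 ≠ 0 := pow_ne_zero 2 (sub_ne_zero.mpr (Ne.symm hy.2.ne))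
  constructor
  · intro h
    rcases div_eq_zero_iff.mp h with h' | h'
    · exact huniq y hy h'
    · exact absurd h' h1y
  · intro h
    rw [h, hpy, zero_div]
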